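/- arXiv:1508.01569 — 3 statements merged into one kernel-verified Lean document; each statement's English description precedes it below -/
import Mathlib

section
/- For an integer t ≥ 5 and distinct odd elements k_1, …, k_w of Z_{2t}, the graph S_{2t}(k_1,…,k_w) has girth at least 6 if and only if all differences k_i − k_j for i ≠ j are pairwise distinct in Z_{2t}. -/
/-- The graph `S_n(k_1,…,k_w)` on `ZMod n`: edges join an even-labeled vertex `a`
to `a + k` for each `k ∈ K`. -/
def SGraph (n : ℕ) (K : Set (ZMod n)) : SimpleGraph (ZMod n) where
  Adj a b := a ≠ b ∧ ((Even a.val ∧ b - a ∈ K) ∨ (Even b.val ∧ a - b ∈ K))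
  symm := by
    constructor
    rintro a b ⟨h1, h2⟩
    exact ⟨h1.symm, h2.symm⟩
  loopless := ⟨fun a h => h.1 rfl⟩

/-- The graph `S_n(P,Q; k_1,…,k_w)` on `ZMod n`: the graph `S_n(k_1,…,k_w)` together with
the edges `{2v, 2v+P}` on even vertices and `{2v+1, 2v+1+Q}` on odd vertices. -/
def SPQGraph (n : ℕ) (P Q : ZMod n) (K : Set (ZMod n)) : SimpleGraph (ZMod n) where
  Adj a b := a ≠ b ∧ (((Even a.val ∧ b - a ∈ K) ∨ (Even b.val ∧ a - b ∈ K))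
    ∨ (Even a.val ∧ Even b.val ∧ (b - a = P ∨ a - b = P))
    ∨ (Odd a.val ∧ Odd b.val ∧ (b - a = Q ∨ a - b = Q)))
  symm := by
    constructor
    rintro a b ⟨h1, h2⟩
    refine ⟨h1.symm, ?_⟩
    rcases h2 with h | ⟨ha, hb, h⟩ | ⟨ha, hb, h⟩
    · exact Or.inl h.symm
    · exact Or.inr (Or.inl ⟨hb, ha, h.symm⟩)
    · exact Or.inr (Or.inr ⟨hb, ha, h.symm⟩)
  loopless := ⟨fun a h => h.1 rfl⟩

/-- The infinite analogue `S_∞(P,Q; k_1,…,k_w)` on `ℤ`. -/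
def SPQGraphZ (P Q : ℤ) (K : Set ℤ) : SimpleGraph ℤ where
  Adj a b := a ≠ b ∧ (((Even a ∧ b - a ∈ K) ∨ (Even b ∧ a - b ∈ K))
    ∨ (Even a ∧ Even b ∧ (b - a = P ∨ a - b = P))
    ∨ (Odd a ∧ Odd b ∧ (b - a = Q ∨ a - b = Q)))
  symm := by
    constructor
    rintro a b ⟨h1, h2⟩
    refine ⟨h1.symm, ?_⟩
    rcases h2 with h | ⟨ha, hb, h⟩ | ⟨ha, hb, h⟩
    · exact Or.inl h.symm
    · exact Or.inr (Or.inl ⟨hb, ha, h.symm⟩)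
    · exact Or.inr (Or.inr ⟨hb, ha, h.symm⟩)
  loopless := ⟨fun a h => h.1 rfl⟩

/-- The Cayley colors of a graph on `ZMod n`: differences of adjacent vertices. -/
def cayleyColors {n : ℕ} (G : SimpleGraph (ZMod n)) : Set (ZMod n) :=
  {c | ∃ a b, G.Adj a b ∧ c = a - b}

section AuxStmt2

open SimpleGraph

variable {t : ℕ}

/-- The parity ring hom `ZMod (2t) → ZMod 2`. -/
def par (t : ℕ) : ZMod (2 * t) →+* ZMod 2 := ZMod.castHom ⟨t, rfl⟩ (ZMod 2)

lemma par_apply [NeZero (2 * t)] (x : ZMod (2 * t)) : par t x = (x.val : ZMod 2) := by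
  rw [par, ZMod.castHom_apply, ZMod.natCast_val]

lemma par_zero_iff [NeZero (2 * t)] (x : ZMod (2 * t)) : par t x = 0 ↔ Even x.val := by
  rw [par_apply, ZMod.natCast_eq_zero_iff]
  exact ⟨fun h => (even_iff_two_dvd).2 h, fun h => (even_iff_two_dvd).1 h⟩

lemma par_one_iff [NeZero (2 * t)] (x : ZMod (2 * t)) : par t x = 1 ↔ Odd x.val := by
  rw [← Nat.not_even_iff_odd, ← par_zero_iff x]
  have : ∀ y : ZMod 2, y = 1 ↔ ¬ y = 0 := by decide
  exact this _

lemma adj_par [NeZero (2 * t)] {K : Set (ZMod (2 * t))} (hodd : ∀ k ∈ K, Odd (k : ZMod (2*t)).val)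
    {a b : ZMod (2 * t)} (h : (SGraph (2 * t) K).Adj a b) : par t b = par t a + 1 := by
  rcases h.2 with ⟨_, hk⟩ | ⟨_, hk⟩
  · have h1 : par t (b - a) = 1 := (par_one_iff _).2 (hodd _ hk)
    have : par t b - par t a = 1 := by rw [← map_sub]; exact h1
    linear_combination this
  · have h1 : par t (a - b) = 1 := (par_one_iff _).2 (hodd _ hk)
    have h2 : par t a - par t b = 1 := by rw [← map_sub]; exact h1
    have h3 : (2 : ZMod 2) = 0 := by decide
    linear_combination -h2 - h3

lemma walk_par [NeZero (2 * t)] {K : Set (ZMod (2 * t))}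
    (hodd : ∀ k ∈ K, Odd (k : ZMod (2*t)).val) :
    ∀ {a b : ZMod (2 * t)} (p : (SGraph (2 * t) K).Walk a b),
      par t b = par t a + (p.length : ZMod 2) := by
  intro a b p
  induction p with
  | nil => simp
  | cons h q ih =>
    rw [SimpleGraph.Walk.length_cons]
    have h1 := adj_par hodd h
    push_cast
    rw [ih, h1]
    ring

lemma cycle_even_length [NeZero (2 * t)] {K : Set (ZMod (2 * t))}
    (hodd : ∀ k ∈ K, Odd (k : ZMod (2*t)).val)
    {a : ZMod (2 * t)} (p : (SGraph (2 * t) K).Walk a a) : Even p.length := by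
  have := walk_par hodd p
  have h0 : (p.length : ZMod 2) = 0 := by linear_combination -this
  rw [ZMod.natCast_eq_zero_iff] at h0
  exact even_iff_two_dvd.2 h0

lemma walk_len4 {V : Type*} {G : SimpleGraph V} :
    ∀ {x y : V} (p : G.Walk x y), p.length = 4 →
      ∃ v1 v2 v3, G.Adj x v1 ∧ G.Adj v1 v2 ∧ G.Adj v2 v3 ∧ G.Adj v3 y ∧
        p.support = [x, v1, v2, v3, y] := by
  intro x y p hp
  cases p with
  | nil => simp at hp
  | cons h1 q =>
    cases q with
    | nil => simp at hp
    | cons h2 q =>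
      cases q with
      | nil => simp at hp
      | cons h3 q =>
        cases q with
        | nil => simp at hp
        | cons h4 q =>
          cases q with
          | nil => exact ⟨_, _, _, h1, h2, h3, h4, rfl⟩
          | cons h5 q => simp [SimpleGraph.Walk.length_cons] at hp

end AuxStmt2

/-- For t ≥ 5 and distinct odd elements k_1,…,k_w of Z_{2t}, the graph
S_{2t}(k_1,…,k_w) has girth at least 6 iff all differences k_i − k_j (i ≠ j)
are pairwise distinct in Z_{2t}. -/
theorem stmt2 (t : ℕ) (ht : 5 ≤ t) (K : Finset (ZMod (2 * t)))
    (hodd : ∀ k ∈ K, Odd k.val) :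
    6 ≤ (SGraph (2 * t) (K : Set (ZMod (2 * t)))).egirth ↔
      ∀ a ∈ K, ∀ b ∈ K, ∀ c ∈ K, ∀ d ∈ K,
        a ≠ b → c ≠ d → (a, b) ≠ (c, d) → a - b ≠ c - d := by
  haveI : NeZero (2 * t) := ⟨by omega⟩
  have hodd' : ∀ k ∈ (K : Set (ZMod (2 * t))), Odd (k : ZMod (2 * t)).val := by
    intro k hk; exact hodd k hk
  constructor
  · -- girth ≥ 6 → differences distinct
    intro h6 a ha b hb c hc d hd hab hcd hne heq
    -- build a 4-cycle 0, a, a-b, c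
    have hpa : par t a = 1 := (par_one_iff _).2 (hodd a ha)
    have hpb : par t b = 1 := (par_one_iff _).2 (hodd b hb)
    have hpc : par t c = 1 := (par_one_iff _).2 (hodd c hc)
    have hp0 : par t (0 : ZMod (2 * t)) = 0 := map_zero _
    have hpab : par t (a - b) = 0 := by rw [map_sub, hpa, hpb]; ring
    have e0 : Even (0 : ZMod (2 * t)).val := (par_zero_iff _).1 hp0
    have eab : Even (a - b).val := (par_zero_iff _).1 hpab
    have h0a : (0 : ZMod (2 * t)) ≠ a := fun h => by rw [← h, hp0] at hpa; exact one_ne_zero hpa.symm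
    have h0c : (0 : ZMod (2 * t)) ≠ c := fun h => by rw [← h, hp0] at hpc; exact one_ne_zero hpc.symm
    have h0ab : (0 : ZMod (2 * t)) ≠ a - b := fun h => hab (by linear_combination -h)
    have haab : a ≠ a - b := fun h => by rw [← h, hpa] at hpab; exact one_ne_zero hpab
    have habc : a - b ≠ c := fun h => by rw [h, hpc] at hpab; exact one_ne_zero hpab
    have hac : a ≠ c := fun h => hne (by
      have : b = d := by linear_combination h - heq
      rw [h, this])
    have hd' : c - (a - b) ∈ (K : Set (ZMod (2 * t))) := by
      have : c - (a - b) = d := by linear_combination -heq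
      rw [this]; exact hd
    have adj01 : (SGraph (2 * t) (K : Set (ZMod (2 * t)))).Adj 0 a :=
      ⟨h0a, Or.inl ⟨e0, by simpa using ha⟩⟩
    have adj12 : (SGraph (2 * t) (K : Set (ZMod (2 * t)))).Adj a (a - b) :=
      ⟨haab, Or.inr ⟨eab, by simpa using hb⟩⟩
    have adj23 : (SGraph (2 * t) (K : Set (ZMod (2 * t)))).Adj (a - b) c :=
      ⟨habc, Or.inl ⟨eab, hd'⟩⟩
    have adj30 : (SGraph (2 * t) (K : Set (ZMod (2 * t)))).Adj c 0 :=
      ⟨h0c.symm, Or.inr ⟨e0, by simpa using hc⟩⟩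
    let w : (SGraph (2 * t) (K : Set (ZMod (2 * t)))).Walk 0 0 :=
      .cons adj01 (.cons adj12 (.cons adj23 (.cons adj30 .nil)))
    have h0a' := h0a.symm
    have h0c' := h0c.symm
    have h0ab' := h0ab.symm
    have haab' := haab.symm
    have habc' := habc.symm
    have hac' := hac.symm
    have hw : w.IsCycle := by
      rw [SimpleGraph.Walk.isCycle_def]
      refine ⟨?_, by simp [w], ?_⟩
      · rw [SimpleGraph.Walk.isTrail_def]
        simp only [w, SimpleGraph.Walk.edges_cons, SimpleGraph.Walk.edges_nil,
          List.nodup_cons, List.mem_cons, List.not_mem_nil, or_false,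
          List.mem_singleton, List.nodup_nil, and_true, Sym2.eq, Sym2.rel_iff',
          Prod.mk.injEq, Prod.swap_prod_mk, not_or]
        push_neg
        tauto
      · simp only [w, SimpleGraph.Walk.support_cons, SimpleGraph.Walk.support_nil,
          List.tail_cons, List.nodup_cons, List.mem_cons, List.not_mem_nil, or_false,
          List.mem_singleton, List.nodup_nil, and_true, not_or]
        push_neg
        tauto
    have := SimpleGraph.le_egirth.1 h6 0 w hw
    have hwl : w.length = 4 := by simp [w]
    rw [hwl] at this
    norm_num at this
  · -- differences distinct → girth ≥ 6
    intro hcond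
    rw [SimpleGraph.le_egirth]
    intro v w hw
    by_contra hlt
    push_neg at hlt
    have h3 := hw.three_le_length
    have hev := cycle_even_length hodd' w
    have hlen : w.length = 4 := by
      rcases hev with ⟨m, hm⟩
      have : (w.length : ℕ∞) < 6 := hlt
      have hl6 : w.length < 6 := by exact_mod_cast this
      omega
    obtain ⟨v1, v2, v3, h1, h2, h3', h4, hsup⟩ := walk_len4 w hlen
    -- distinctness from the cycle
    have hnodup : w.support.tail.Nodup := hw.2
    rw [hsup] at hnodup
    simp only [List.tail_cons, List.nodup_cons, List.mem_cons, List.not_mem_nil, or_false,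
      List.mem_singleton, List.nodup_nil, and_true] at hnodup
    push_neg at hnodup
    obtain ⟨⟨h12, h13, h1v⟩, ⟨h23, h2v⟩, h3v⟩ := hnodup
    -- parities
    have p1 : par t v1 = par t v + 1 := adj_par hodd' h1
    have p2 : par t v2 = par t v1 + 1 := adj_par hodd' h2
    have p3 : par t v3 = par t v2 + 1 := adj_par hodd' h3'
    by_cases hv : Even v.val
    · have pv : par t v = 0 := (par_zero_iff _).2 hv
      have hv1 : ¬ Even v1.val := by
        rw [← par_zero_iff]; rw [p1, pv]; norm_num
      have hv2 : Even v2.val := by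
        rw [← par_zero_iff, p2, p1, pv]
        have : (1 : ZMod 2) + 1 = 0 := by decide
        rw [zero_add, this]
      have hv3 : ¬ Even v3.val := by
        rw [← par_zero_iff, p3, (par_zero_iff _).2 hv2]; norm_num
      rcases h1.2 with ⟨_, hk1⟩ | ⟨he, _⟩; swap; · exact hv1 he
      rcases h2.2 with ⟨he, _⟩ | ⟨_, hk2⟩; · exact hv1 he
      rcases h3'.2 with ⟨_, hk3⟩ | ⟨he, _⟩; swap; · exact hv3 he
      rcases h4.2 with ⟨he, _⟩ | ⟨_, hk4⟩; · exact hv3 he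
      refine hcond _ hk1 _ hk2 _ hk4 _ hk3 ?_ ?_ ?_ (by ring)
      · exact fun h => h2v.symm (by linear_combination -h)
      · exact fun h => h2v.symm (by linear_combination -h)
      · intro h
        have := congrArg Prod.fst h
        simp only at this
        exact h13 (by linear_combination this)
    · have pv : par t v = 1 := by
        rw [par_one_iff, Nat.odd_iff, Nat.not_even_iff] at *; exact hv
      have hv1 : Even v1.val := by
        rw [← par_zero_iff, p1, pv]
        have : (1 : ZMod 2) + 1 = 0 := by decide
        exact this
      have hv2 : ¬ Even v2.val := by
        rw [← par_zero_iff, p2, (par_zero_iff _).2 hv1]; norm_num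
      have hv3 : Even v3.val := by
        rw [← par_zero_iff, p3, p2, (par_zero_iff _).2 hv1]
        have : (0 : ZMod 2) + 1 + 1 = 0 := by decide
        exact this
      rcases h1.2 with ⟨he, _⟩ | ⟨_, hk1⟩; · exact hv he
      rcases h2.2 with ⟨_, hk2⟩ | ⟨he, _⟩; swap; · exact hv2 he
      rcases h3'.2 with ⟨he, _⟩ | ⟨_, hk3⟩; · exact hv2 he
      rcases h4.2 with ⟨_, hk4⟩ | ⟨he, _⟩; swap; · exact hv he
      refine hcond _ hk1 _ hk2 _ hk4 _ hk3 ?_ ?_ ?_ (by ring)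
      · exact fun h => h2v.symm (by linear_combination h)
      · exact fun h => h2v.symm (by linear_combination h)
      · intro h
        have := congrArg Prod.fst h
        simp only at this
        exact h13 (by linear_combination -this)
end

section
/- The graph S_{2t}(P,Q; k_1,…,k_w) has girth at least 5 if and only if: (i) 3P, 4P, 3Q, 4Q are all nonzero in Z_{2t}; (ii) all differences k_i − k_j with i ≠ j are pairwise distinct in Z_{2t}; and (iii) no relation k_i − k_j = ω − ω′ holds with ω, ω′ ∈ {0, ±P, ±Q} (and k_i − k_j ≠ 0 when i ≠ j). -/
lemma val_parity {n : ℕ} [NeZero n] (hn : 2 ∣ n) (x y : ZMod n) :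
    (x + y).val % 2 = (x.val + y.val) % 2 := by
  rw [ZMod.val_add, Nat.mod_mod_of_dvd _ hn]

lemma sub_parity {n : ℕ} [NeZero n] (hn : 2 ∣ n) (x y : ZMod n) :
    x.val % 2 = ((x - y).val + y.val) % 2 := by
  have := val_parity hn (x - y) y
  rw [sub_add_cancel] at this
  omega


lemma cycle3 {V : Type*} {G : SimpleGraph V} {a : V} (w : G.Walk a a) (hw : w.IsCycle)
    (h3 : w.length = 3) :
    ∃ b c, G.Adj a b ∧ G.Adj b c ∧ G.Adj c a ∧ a ≠ b ∧ a ≠ c ∧ b ≠ c := by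
  cases w with
  | nil => simp at h3
  | cons h1 p =>
    cases p with
    | nil => simp at h3
    | cons h2 q =>
      cases q with
      | nil => simp at h3
      | cons h3' r =>
        cases r with
        | nil =>
          have hs := hw.2
          simp [List.nodup_cons] at hs
          exact ⟨_, _, h1, h2, h3', fun h => hs.1.2 h.symm, fun h => hs.2 h.symm, hs.1.1⟩
        | cons h4 s => simp at h3

lemma cycle4 {V : Type*} {G : SimpleGraph V} {a : V} (w : G.Walk a a) (hw : w.IsCycle)
    (h4 : w.length = 4) :
    ∃ b c d, G.Adj a b ∧ G.Adj b c ∧ G.Adj c d ∧ G.Adj d a ∧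
      a ≠ b ∧ a ≠ c ∧ a ≠ d ∧ b ≠ c ∧ b ≠ d ∧ c ≠ d := by
  cases w with
  | nil => simp at h4
  | cons h1 p =>
    cases p with
    | nil => simp at h4
    | cons h2 q =>
      cases q with
      | nil => simp at h4
      | cons h3' r =>
        cases r with
        | nil => simp at h4
        | cons h4' s =>
          cases s with
          | nil =>
            have hs := hw.2
            simp [List.nodup_cons] at hs
            exact ⟨_, _, _, h1, h2, h3', h4', fun h => hs.1.2.2 h.symm,
              fun h => hs.2.1.2 h.symm, fun h => hs.2.2 h.symm, hs.1.1, hs.1.2.1, hs.2.1.1⟩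
          | cons h5 u => simp at h4
lemma noshort (n : ℕ) [NeZero n] (hn2 : 2 ∣ n) (p q : ZMod n)
    (hp0 : p ≠ 0) (hq0 : q ≠ 0)
    (h2p : p + p ≠ 0) (h3p : p + p + p ≠ 0) (h4p : p + p + p + p ≠ 0)
    (h2q : q + q ≠ 0) (h3q : q + q + q ≠ 0) (h4q : q + q + q + q ≠ 0)
    (hpq : p ≠ q) (hpq' : p + q ≠ 0)
    (K : Set (ZMod n)) (hodd : ∀ k ∈ K, k.val % 2 = 1)
    (hK2 : ∀ a ∈ K, ∀ b ∈ K, ∀ c ∈ K, ∀ d ∈ K,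
      a ≠ b → c ≠ d → (a, b) ≠ (c, d) → a - b ≠ c - d)
    (hK3 : ∀ a ∈ K, ∀ b ∈ K, a ≠ b → ∀ ω ω' : ZMod n,
      (ω = 0 ∨ ω = p ∨ ω = -p ∨ ω = q ∨ ω = -q) →
      (ω' = 0 ∨ ω' = p ∨ ω' = -p ∨ ω' = q ∨ ω' = -q) → a - b ≠ ω - ω') :
    5 ≤ (SPQGraph n p q K).egirth := by
  set G := SPQGraph n p q K with hG
  have adjK : ∀ x y : ZMod n, G.Adj x y → x.val % 2 = 0 → y.val % 2 = 1 → y - x ∈ K := by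
    intro x y h hx hy
    obtain ⟨hne, hc⟩ := h
    rcases hc with (⟨_, hk⟩ | ⟨he, hk⟩) | ⟨he1, he2, _⟩ | ⟨ho1, _, _⟩
    · exact hk
    · rw [Nat.even_iff] at he; omega
    · rw [Nat.even_iff] at he2; omega
    · rw [Nat.odd_iff] at ho1; omega
  have adjP : ∀ x y : ZMod n, G.Adj x y → x.val % 2 = 0 → y.val % 2 = 0 →
      (y - x = p ∨ y - x = -p) := by
    intro x y h hx hy
    obtain ⟨hne, hc⟩ := h
    rcases hc with (⟨_, hk⟩ | ⟨_, hk⟩) | ⟨_, _, hp⟩ | ⟨ho1, _, _⟩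
    · have h1 := hodd _ hk; have h2 := sub_parity hn2 y x; omega
    · have h1 := hodd _ hk; have h2 := sub_parity hn2 x y; omega
    · rcases hp with h|h
      · exact Or.inl h
      · exact Or.inr (by linear_combination -h)
    · rw [Nat.odd_iff] at ho1; omega
  have adjQ : ∀ x y : ZMod n, G.Adj x y → x.val % 2 = 1 → y.val % 2 = 1 →
      (y - x = q ∨ y - x = -q) := by
    intro x y h hx hy
    obtain ⟨hne, hc⟩ := h
    rcases hc with (⟨he, hk⟩ | ⟨he, hk⟩) | ⟨he1, _, _⟩ | ⟨_, _, hq⟩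
    · rw [Nat.even_iff] at he; omega
    · rw [Nat.even_iff] at he; omega
    · rw [Nat.even_iff] at he1; omega
    · rcases hq with h|h
      · exact Or.inl h
      · exact Or.inr (by linear_combination -h)
  have flip' : ∀ x y w : ZMod n, (y - x = w ∨ y - x = -w) → (x - y = w ∨ x - y = -w) := by
    intro x y w h
    rcases h with h|h
    · exact Or.inr (by linear_combination -h)
    · exact Or.inl (by linear_combination -h)
  have hQP : ∀ u v : ZMod n, (u = q ∨ u = -q) → (v = p ∨ v = -p) → u ≠ v := by
    rintro u v (rfl|rfl) (rfl|rfl) h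
    · exact hpq h.symm
    · exact hpq' (by linear_combination h)
    · exact hpq' (by linear_combination -h)
    · exact hpq (by linear_combination h)
  have memP : ∀ v : ZMod n, (v = p ∨ v = -p) →
      (v = 0 ∨ v = p ∨ v = -p ∨ v = q ∨ v = -q) := fun v hv => Or.inr (hv.imp_right Or.inl)
  have memQ : ∀ v : ZMod n, (v = q ∨ v = -q) →
      (v = 0 ∨ v = p ∨ v = -p ∨ v = q ∨ v = -q) := fun v hv => Or.inr (Or.inr (Or.inr hv))
  rw [SimpleGraph.le_egirth]
  intro a w hw
  by_contra hlt
  have hlen : w.length < 5 := by exact_mod_cast not_le.mp hlt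
  have h3le := hw.three_le_length
  have hc : w.length = 3 ∨ w.length = 4 := by omega
  rcases hc with hlen3 | hlen4
  · -- no triangles
    obtain ⟨b, c, hab, hbc, hca, hab', hac', hbc'⟩ := cycle3 w hw hlen3
    rcases Nat.mod_two_eq_zero_or_one a.val with ha|ha <;>
    rcases Nat.mod_two_eq_zero_or_one b.val with hb|hb <;>
    rcases Nat.mod_two_eq_zero_or_one c.val with hc|hc
    · -- 000 : pure P
      have h1 := adjP a b hab ha hb
      have h2 := adjP b c hbc hb hc
      have h3 := adjP c a hca hc ha
      rcases h1 with h1|h1 <;> rcases h2 with h2|h2 <;> rcases h3 with h3|h3 <;>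
        first
        | exact hp0 (by linear_combination h1 + h2 + h3)
        | exact hp0 (by linear_combination -h1 - h2 - h3)
        | exact h3p (by linear_combination -h1 - h2 - h3)
        | exact h3p (by linear_combination h1 + h2 + h3)
    · -- 001 : a,b even, c odd
      have h1 := adjP a b hab ha hb
      have hk1 := adjK b c hbc hb hc
      have hk2 := adjK a c hca.symm ha hc
      exact hK3 _ hk1 _ hk2 (fun h => hab' (by linear_combination h)) (a - b) 0
        (memP _ (flip' a b p h1)) (Or.inl rfl) (by ring)
    · -- 010 : b odd
      have hk1 := adjK a b hab ha hb
      have hk2 := adjK c b hbc.symm hc hb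
      have h3 := adjP c a hca hc ha
      exact hK3 _ hk1 _ hk2 (fun h => hac' (by linear_combination -h)) (c - a) 0
        (memP _ (flip' c a p h3)) (Or.inl rfl) (by ring)
    · -- 011 : a even, b c odd
      have hk1 := adjK a b hab ha hb
      have h2 := adjQ b c hbc hb hc
      have hk2 := adjK a c hca.symm ha hc
      exact hK3 _ hk1 _ hk2 (fun h => hbc' (by linear_combination h)) (b - c) 0
        (memQ _ (flip' b c q h2)) (Or.inl rfl) (by ring)
    · -- 100 : a odd
      have hk1 := adjK b a hab.symm hb ha
      have h2 := adjP b c hbc hb hc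
      have hk2 := adjK c a hca hc ha
      exact hK3 _ hk1 _ hk2 (fun h => hbc' (by linear_combination -h)) (c - b) 0
        (memP _ h2) (Or.inl rfl) (by ring)
    · -- 101 : b even
      have hk1 := adjK b a hab.symm hb ha
      have hk2 := adjK b c hbc hb hc
      have h3 := adjQ c a hca hc ha
      exact hK3 _ hk1 _ hk2 (fun h => hac' (by linear_combination h)) (a - c) 0
        (memQ _ h3) (Or.inl rfl) (by ring)
    · -- 110 : c even
      have h1 := adjQ a b hab ha hb
      have hk1 := adjK c b hbc.symm hc hb
      have hk2 := adjK c a hca hc ha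
      exact hK3 _ hk1 _ hk2 (fun h => hab' (by linear_combination -h)) (b - a) 0
        (memQ _ h1) (Or.inl rfl) (by ring)
    · -- 111 : pure Q
      have h1 := adjQ a b hab ha hb
      have h2 := adjQ b c hbc hb hc
      have h3 := adjQ c a hca hc ha
      rcases h1 with h1|h1 <;> rcases h2 with h2|h2 <;> rcases h3 with h3|h3 <;>
        first
        | exact hq0 (by linear_combination h1 + h2 + h3)
        | exact hq0 (by linear_combination -h1 - h2 - h3)
        | exact h3q (by linear_combination -h1 - h2 - h3)
        | exact h3q (by linear_combination h1 + h2 + h3)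
  · -- no 4-cycles
    obtain ⟨b, c, d, hab, hbc, hcd, hda, hab', hac', had', hbc', hbd', hcd'⟩ := cycle4 w hw hlen4
    rcases Nat.mod_two_eq_zero_or_one a.val with ha|ha <;>
    rcases Nat.mod_two_eq_zero_or_one b.val with hb|hb <;>
    rcases Nat.mod_two_eq_zero_or_one c.val with hc|hc <;>
    rcases Nat.mod_two_eq_zero_or_one d.val with hd|hd
    · -- 0000 : pure P
      have h1 := adjP a b hab ha hb
      have h2 := adjP b c hbc hb hc
      have h3 := adjP c d hcd hc hd
      have h4 := adjP d a hda hd ha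
      rcases h1 with h1|h1 <;> rcases h2 with h2|h2 <;> rcases h3 with h3|h3 <;>
          rcases h4 with h4|h4 <;>
        first
        | exact hac' (by linear_combination -h1 - h2)
        | exact hbd' (by linear_combination -h2 - h3)
        | exact h2p (by linear_combination h1 + h2 + h3 + h4)
        | exact h2p (by linear_combination -h1 - h2 - h3 - h4)
        | exact h4p (by linear_combination h1 + h2 + h3 + h4)
        | exact h4p (by linear_combination -h1 - h2 - h3 - h4)
    · -- 0001 : d odd
      have h1 := adjP a b hab ha hb
      have h2 := adjP b c hbc hb hc
      have hk1 := adjK c d hcd hc hd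
      have hk2 := adjK a d hda.symm ha hd
      exact hK3 _ hk1 _ hk2 (fun h => hac' (by linear_combination h)) (a - b) (c - b)
        (memP _ (flip' a b p h1)) (memP _ h2) (by ring)
    · -- 0010 : c odd
      have h1 := adjP a b hab ha hb
      have hk1 := adjK b c hbc hb hc
      have hk2 := adjK d c hcd.symm hd hc
      have h4 := adjP d a hda hd ha
      exact hK3 _ hk1 _ hk2 (fun h => hbd' (by linear_combination -h)) (a - b) (a - d)
        (memP _ (flip' a b p h1)) (memP _ h4) (by ring)
    · -- 0011 : c,d odd
      have h1 := adjP a b hab ha hb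
      have hk1 := adjK b c hbc hb hc
      have h3 := adjQ c d hcd hc hd
      have hk2 := adjK a d hda.symm ha hd
      have h3' := flip' c d q h3
      exact hK3 _ hk1 _ hk2 (fun h => hQP _ _ h3' h1 (by linear_combination h)) (c - d) (b - a)
        (memQ _ h3') (memP _ h1) (by ring)
    · -- 0100 : b odd
      have hk1 := adjK a b hab ha hb
      have hk2 := adjK c b hbc.symm hc hb
      have h3 := adjP c d hcd hc hd
      have h4 := adjP d a hda hd ha
      exact hK3 _ hk1 _ hk2 (fun h => hac' (by linear_combination -h)) (c - d) (a - d)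
        (memP _ (flip' c d p h3)) (memP _ h4) (by ring)
    · -- 0101 : b,d odd : all K
      have hk1 := adjK a b hab ha hb
      have hk2 := adjK c b hbc.symm hc hb
      have hk3 := adjK c d hcd hc hd
      have hk4 := adjK a d hda.symm ha hd
      exact hK2 _ hk1 _ hk2 _ hk4 _ hk3
        (fun h => hac' (by linear_combination -h))
        (fun h => hac' (by linear_combination -h))
        (fun h => hbd' (by linear_combination (Prod.ext_iff.mp h).1)) (by ring)
    · -- 0110 : b,c odd
      have hk1 := adjK a b hab ha hb
      have h2 := adjQ b c hbc hb hc
      have hk2 := adjK d c hcd.symm hd hc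
      have h4 := adjP d a hda hd ha
      have h2' := flip' b c q h2
      exact hK3 _ hk1 _ hk2 (fun h => hQP _ _ h2' h4 (by linear_combination h)) (b - c) (a - d)
        (memQ _ h2') (memP _ h4) (by ring)
    · -- 0111 : a even
      have hk1 := adjK a b hab ha hb
      have h2 := adjQ b c hbc hb hc
      have h3 := adjQ c d hcd hc hd
      have hk2 := adjK a d hda.symm ha hd
      exact hK3 _ hk1 _ hk2 (fun h => hbd' (by linear_combination h)) (b - c) (d - c)
        (memQ _ (flip' b c q h2)) (memQ _ h3) (by ring)
    · -- 1000 : a odd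
      have hk1 := adjK b a hab.symm hb ha
      have h2 := adjP b c hbc hb hc
      have h3 := adjP c d hcd hc hd
      have hk2 := adjK d a hda hd ha
      exact hK3 _ hk1 _ hk2 (fun h => hbd' (by linear_combination -h)) (c - b) (c - d)
        (memP _ h2) (memP _ (flip' c d p h3)) (by ring)
    · -- 1001 : a,d odd
      have hk1 := adjK b a hab.symm hb ha
      have h2 := adjP b c hbc hb hc
      have hk2 := adjK c d hcd hc hd
      have h4 := adjQ d a hda hd ha
      have h2' := flip' b c p h2
      exact hK3 _ hk1 _ hk2 (fun h => hQP _ _ h4 h2' (by linear_combination h)) (a - d) (b - c)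
        (memQ _ h4) (memP _ h2') (by ring)
    · -- 1010 : a,c odd : all K
      have hk1 := adjK b a hab.symm hb ha
      have hk2 := adjK b c hbc hb hc
      have hk3 := adjK d c hcd.symm hd hc
      have hk4 := adjK d a hda hd ha
      exact hK2 _ hk1 _ hk2 _ hk4 _ hk3
        (fun h => hac' (by linear_combination h))
        (fun h => hac' (by linear_combination h))
        (fun h => hbd' (by linear_combination -(Prod.ext_iff.mp h).1)) (by ring)
    · -- 1011 : b even
      have hk1 := adjK b a hab.symm hb ha
      have hk2 := adjK b c hbc hb hc
      have h3 := adjQ c d hcd hc hd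
      have h4 := adjQ d a hda hd ha
      exact hK3 _ hk1 _ hk2 (fun h => hac' (by linear_combination h)) (a - d) (c - d)
        (memQ _ h4) (memQ _ (flip' c d q h3)) (by ring)
    · -- 1100 : a,b odd
      have h1 := adjQ a b hab ha hb
      have hk1 := adjK c b hbc.symm hc hb
      have h3 := adjP c d hcd hc hd
      have hk2 := adjK d a hda hd ha
      have h3' := flip' c d p h3
      exact hK3 _ hk1 _ hk2 (fun h => hQP _ _ h1 h3' (by linear_combination h)) (b - a) (c - d)
        (memQ _ h1) (memP _ h3') (by ring)
    · -- 1101 : c even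
      have h1 := adjQ a b hab ha hb
      have hk1 := adjK c b hbc.symm hc hb
      have hk2 := adjK c d hcd hc hd
      have h4 := adjQ d a hda hd ha
      exact hK3 _ hk1 _ hk2 (fun h => hbd' (by linear_combination h)) (b - a) (d - a)
        (memQ _ h1) (memQ _ (flip' d a q h4)) (by ring)
    · -- 1110 : d even
      have h1 := adjQ a b hab ha hb
      have h2 := adjQ b c hbc hb hc
      have hk1 := adjK d c hcd.symm hd hc
      have hk2 := adjK d a hda hd ha
      exact hK3 _ hk1 _ hk2 (fun h => hac' (by linear_combination -h)) (c - b) (a - b)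
        (memQ _ h2) (memQ _ (flip' a b q h1)) (by ring)
    · -- 1111 : pure Q
      have h1 := adjQ a b hab ha hb
      have h2 := adjQ b c hbc hb hc
      have h3 := adjQ c d hcd hc hd
      have h4 := adjQ d a hda hd ha
      rcases h1 with h1|h1 <;> rcases h2 with h2|h2 <;> rcases h3 with h3|h3 <;>
          rcases h4 with h4|h4 <;>
        first
        | exact hac' (by linear_combination -h1 - h2)
        | exact hbd' (by linear_combination -h2 - h3)
        | exact h2q (by linear_combination h1 + h2 + h3 + h4)
        | exact h2q (by linear_combination -h1 - h2 - h3 - h4)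
        | exact h4q (by linear_combination h1 + h2 + h3 + h4)
        | exact h4q (by linear_combination -h1 - h2 - h3 - h4)

open SimpleGraph

lemma mk3 {V : Type*} {G : SimpleGraph V} {u v w : V} (h1 : G.Adj u v) (h2 : G.Adj v w)
    (h3 : G.Adj w u) (huw : u ≠ w) : ¬ (5 ≤ G.egirth) := by
  intro h5
  have e1 := h1.ne; have e2 := h2.ne; have e3 := h3.ne
  have e1' := h1.ne'; have e2' := h2.ne'; have e3' := h3.ne'
  have huw' := huw.symm
  have hcyc : (Walk.cons h1 (Walk.cons h2 (Walk.cons h3 Walk.nil))).IsCycle := by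
    simp only [Walk.isCycle_def, Walk.isTrail_def, Walk.edges_cons, Walk.edges_nil,
      Walk.support_cons, Walk.support_nil, List.tail_cons, List.nodup_cons, List.nodup_nil,
      List.mem_cons, List.mem_singleton, List.not_mem_nil, Sym2.eq_iff, ne_eq,
      not_false_eq_true, and_true, List.mem_nil_iff, or_false]
    refine ⟨⟨?_, ?_⟩, by simp, ?_⟩ <;> tauto
  have := SimpleGraph.le_egirth.mp h5 u _ hcyc
  norm_num at this

lemma mk4 {V : Type*} {G : SimpleGraph V} {u v w x : V} (h1 : G.Adj u v) (h2 : G.Adj v w)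
    (h3 : G.Adj w x) (h4 : G.Adj x u) (huw : u ≠ w) (hvx : v ≠ x) : ¬ (5 ≤ G.egirth) := by
  intro h5
  have e1 := h1.ne; have e2 := h2.ne; have e3 := h3.ne; have e4 := h4.ne
  have e1' := h1.ne'; have e2' := h2.ne'; have e3' := h3.ne'; have e4' := h4.ne'
  have huw' := huw.symm; have hvx' := hvx.symm
  have hcyc : (Walk.cons h1 (Walk.cons h2 (Walk.cons h3 (Walk.cons h4 Walk.nil)))).IsCycle := by
    simp only [Walk.isCycle_def, Walk.isTrail_def, Walk.edges_cons, Walk.edges_nil,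
      Walk.support_cons, Walk.support_nil, List.tail_cons, List.nodup_cons, List.nodup_nil,
      List.mem_cons, List.mem_singleton, List.not_mem_nil, Sym2.eq_iff, ne_eq,
      not_false_eq_true, and_true, List.mem_nil_iff, or_false]
    refine ⟨⟨?_, ?_, ?_⟩, by simp, ?_⟩ <;> tauto
  have := SimpleGraph.le_egirth.mp h5 u _ hcyc
  norm_num at this

lemma conds (n : ℕ) [NeZero n] (hn1 : 1 < n) (hn2 : 2 ∣ n) (p q : ZMod n)
    (hpv : p.val % 2 = 0) (hqv : q.val % 2 = 0)
    (hp0 : p ≠ 0) (hq0 : q ≠ 0) (h2p : p + p ≠ 0) (h2q : q + q ≠ 0)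
    (K : Set (ZMod n)) (hodd : ∀ k ∈ K, k.val % 2 = 1)
    (h5 : 5 ≤ (SPQGraph n p q K).egirth) :
    ((p + p + p ≠ 0) ∧ (p + p + p + p ≠ 0) ∧ (q + q + q ≠ 0) ∧ (q + q + q + q ≠ 0)) ∧
    (∀ a ∈ K, ∀ b ∈ K, ∀ c ∈ K, ∀ d ∈ K,
      a ≠ b → c ≠ d → (a, b) ≠ (c, d) → a - b ≠ c - d) ∧
    (∀ a ∈ K, ∀ b ∈ K, a ≠ b → ∀ ω ω' : ZMod n,
      (ω = 0 ∨ ω = p ∨ ω = -p ∨ ω = q ∨ ω = -q) →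
      (ω' = 0 ∨ ω' = p ∨ ω' = -p ∨ ω' = q ∨ ω' = -q) → a - b ≠ ω - ω') := by
  haveI : Fact (1 < n) := ⟨hn1⟩
  set G := SPQGraph n p q K with hG
  have par0 : (0 : ZMod n).val % 2 = 0 := by rw [ZMod.val_zero]
  have par1 : (1 : ZMod n).val % 2 = 1 := by rw [ZMod.val_one]
  have par_sub : ∀ x y : ZMod n, (x - y).val % 2 = (x.val + y.val) % 2 := fun x y => by
    have := sub_parity hn2 x y; omega
  have par_add : ∀ x y : ZMod n, (x + y).val % 2 = (x.val + y.val) % 2 := fun x y =>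
    val_parity hn2 x y
  have par_neg : ∀ x : ZMod n, (-x).val % 2 = x.val % 2 := fun x => by
    have h := sub_parity hn2 0 x
    rw [zero_sub, ZMod.val_zero] at h
    omega
  have ne_eo : ∀ x y : ZMod n, x.val % 2 = 0 → y.val % 2 = 1 → x ≠ y := fun x y hx hy h => by
    rw [h] at hx; omega
  have mkP : ∀ x y : ZMod n, x ≠ y → x.val % 2 = 0 → y.val % 2 = 0 →
      (y - x = p ∨ x - y = p) → G.Adj x y := fun x y hne hx hy h =>
    ⟨hne, Or.inr (Or.inl ⟨Nat.even_iff.mpr hx, Nat.even_iff.mpr hy, h⟩)⟩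
  have mkQ : ∀ x y : ZMod n, x ≠ y → x.val % 2 = 1 → y.val % 2 = 1 →
      (y - x = q ∨ x - y = q) → G.Adj x y := fun x y hne hx hy h =>
    ⟨hne, Or.inr (Or.inr ⟨Nat.odd_iff.mpr hx, Nat.odd_iff.mpr hy, h⟩)⟩
  have mkK : ∀ x y : ZMod n, x.val % 2 = 0 → y.val % 2 = 1 → y - x ∈ K → G.Adj x y :=
    fun x y hx hy hk => ⟨ne_eo x y hx hy, Or.inl (Or.inl ⟨Nat.even_iff.mpr hx, hk⟩)⟩
  have parP : ∀ s : ZMod n, (s = p ∨ s = -p) → s.val % 2 = 0 := by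
    rintro s (rfl|rfl)
    · exact hpv
    · rw [par_neg]; exact hpv
  have parQ : ∀ s : ZMod n, (s = q ∨ s = -q) → s.val % 2 = 0 := by
    rintro s (rfl|rfl)
    · exact hqv
    · rw [par_neg]; exact hqv
  have HP : ∀ a ∈ K, ∀ b ∈ K, a ≠ b → ∀ s : ZMod n, (s = p ∨ s = -p) → a - b = s → False := by
    intro a ha b hb hab s hs heq
    have hoa := hodd a ha
    have hpar : (a - b).val % 2 = 0 := by have := par_sub a b; have := hodd b hb; omega
    refine mk3 (u := (0 : ZMod n)) (v := a) (w := a - b) ?_ ?_ ?_ ?_ h5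
    · exact mkK 0 a par0 hoa (by simpa using ha)
    · refine (mkK (a - b) a hpar hoa ?_).symm
      rw [show a - (a - b) = b by ring]; exact hb
    · refine mkP (a - b) 0 (fun h => hab (by linear_combination h)) hpar par0 ?_
      rcases hs with rfl|rfl
      · exact Or.inr (by linear_combination heq)
      · exact Or.inl (by linear_combination -heq)
    · exact fun h => hab (by linear_combination -h)
  have HQ : ∀ a ∈ K, ∀ b ∈ K, a ≠ b → ∀ s : ZMod n, (s = q ∨ s = -q) → a - b = s → False := by
    intro a ha b hb hab s hs heq
    have hoa := hodd a ha
    have hob := hodd b hb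
    refine mk3 (u := (0 : ZMod n)) (v := a) (w := b) ?_ ?_ ?_ ?_ h5
    · exact mkK 0 a par0 hoa (by simpa using ha)
    · refine mkQ a b hab hoa hob ?_
      rcases hs with rfl|rfl
      · exact Or.inr heq
      · exact Or.inl (by linear_combination -heq)
    · exact (mkK 0 b par0 hob (by simpa using hb)).symm
    · exact ne_eo 0 b par0 hob
  have H4 : ∀ a ∈ K, ∀ b ∈ K, a ≠ b → ∀ ω ω' : ZMod n, (ω = p ∨ ω = -p) →
      (ω' = p ∨ ω' = -p) → a - b = ω - ω' → False := by
    intro a ha b hb hab ω ω' hω hω' heq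
    have hoa := hodd a ha
    have hparω := parP ω hω
    have hpar : (a - b).val % 2 = 0 := by have := par_sub a b; have := hodd b hb; omega
    refine mk4 (u := (0 : ZMod n)) (v := a) (w := a - b) (x := ω) ?_ ?_ ?_ ?_ ?_ ?_ h5
    · exact mkK 0 a par0 hoa (by simpa using ha)
    · refine (mkK (a - b) a hpar hoa ?_).symm
      rw [show a - (a - b) = b by ring]; exact hb
    · refine mkP (a - b) ω ?_ hpar hparω ?_
      · intro h
        rcases hω' with rfl|rfl
        · exact hp0 (by linear_combination heq - h)
        · exact hp0 (by linear_combination h - heq)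
      · rcases hω' with rfl|rfl
        · exact Or.inl (by linear_combination -heq)
        · exact Or.inr (by linear_combination heq)
    · refine mkP ω 0 ?_ hparω par0 ?_
      · rcases hω with rfl|rfl
        · exact fun h => hp0 h
        · exact fun h => hp0 (by linear_combination -h)
      · rcases hω with rfl|rfl
        · exact Or.inr (by ring)
        · exact Or.inl (by ring)
    · exact fun h => hab (by linear_combination -h)
    · exact (ne_eo ω a hparω hoa).symm
  have H2Q : ∀ a ∈ K, ∀ b ∈ K, a ≠ b → ∀ ω ω' : ZMod n, (ω = q ∨ ω = -q) →
      (ω' = q ∨ ω' = -q) → a - b = ω - ω' → False := by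
    intro a ha b hb hab ω ω' hω hω' heq
    have hoa := hodd a ha
    have hob := hodd b hb
    have hparω := parQ ω hω
    have hpar : (a - ω).val % 2 = 1 := by have := par_sub a ω; omega
    refine mk4 (u := (0 : ZMod n)) (v := a) (w := a - ω) (x := b) ?_ ?_ ?_ ?_ ?_ ?_ h5
    · exact mkK 0 a par0 hoa (by simpa using ha)
    · refine mkQ a (a - ω) ?_ hoa hpar ?_
      · intro h
        rcases hω with rfl|rfl
        · exact hq0 (by linear_combination h)
        · exact hq0 (by linear_combination -h)
      · rcases hω with rfl|rfl
        · exact Or.inr (by ring)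
        · exact Or.inl (by ring)
    · refine mkQ (a - ω) b ?_ hpar hob ?_
      · intro h
        rcases hω' with rfl|rfl
        · exact hq0 (by linear_combination heq - h)
        · exact hq0 (by linear_combination h - heq)
      · rcases hω' with rfl|rfl
        · exact Or.inl (by linear_combination -heq)
        · exact Or.inr (by linear_combination heq)
    · exact (mkK 0 b par0 hob (by simpa using hb)).symm
    · exact ne_eo 0 (a - ω) par0 hpar
    · exact hab
  have H2PQ : ∀ a ∈ K, ∀ b ∈ K, a ≠ b → ∀ ω ω' : ZMod n, (ω = p ∨ ω = -p) →
      (ω' = q ∨ ω' = -q) → a - b = ω - ω' → False := by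
    intro a ha b hb hab ω ω' hω hω' heq
    have hoa := hodd a ha
    have hob := hodd b hb
    have hparω := parP ω hω
    have hpar : (ω + b).val % 2 = 1 := by have := par_add ω b; omega
    refine mk4 (u := (0 : ZMod n)) (v := ω) (w := ω + b) (x := a) ?_ ?_ ?_ ?_ ?_ ?_ h5
    · refine mkP 0 ω ?_ par0 hparω ?_
      · rcases hω with rfl|rfl
        · exact fun h => hp0 h.symm
        · exact fun h => hp0 (by linear_combination h)
      · rcases hω with rfl|rfl
        · exact Or.inl (by ring)
        · exact Or.inr (by ring)
    · refine mkK ω (ω + b) hparω hpar ?_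
      rw [show ω + b - ω = b by ring]; exact hb
    · refine mkQ (ω + b) a ?_ hpar hoa ?_
      · intro h
        rcases hω' with rfl|rfl
        · exact hq0 (by linear_combination heq + h)
        · exact hq0 (by linear_combination -heq - h)
      · rcases hω' with rfl|rfl
        · exact Or.inr (by linear_combination -heq)
        · exact Or.inl (by linear_combination heq)
    · exact (mkK 0 a par0 hoa (by simpa using ha)).symm
    · exact ne_eo 0 (ω + b) par0 hpar
    · exact ne_eo ω a hparω hoa
  refine ⟨⟨?_, ?_, ?_, ?_⟩, ?_, ?_⟩
  · -- 3p ≠ 0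
    intro h0
    have pp : (p + p).val % 2 = 0 := by have := par_add p p; omega
    refine mk3 (u := (0 : ZMod n)) (v := p) (w := p + p) ?_ ?_ ?_ ?_ h5
    · exact mkP 0 p (fun h => hp0 h.symm) par0 hpv (Or.inl (by ring))
    · exact mkP p (p + p) (fun h => hp0 (by linear_combination -h)) hpv pp (Or.inl (by ring))
    · exact mkP (p + p) 0 (fun h => h2p h) pp par0 (Or.inl (by linear_combination -h0))
    · exact fun h => h2p h.symm
  · -- 4p ≠ 0
    intro h0
    have h3p0 : p + p + p ≠ 0 := fun h => hp0 (by linear_combination h0 - h)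
    have pp : (p + p).val % 2 = 0 := by have := par_add p p; omega
    have ppp : (p + p + p).val % 2 = 0 := by have := par_add (p + p) p; omega
    refine mk4 (u := (0 : ZMod n)) (v := p) (w := p + p) (x := p + p + p) ?_ ?_ ?_ ?_ ?_ ?_ h5
    · exact mkP 0 p (fun h => hp0 h.symm) par0 hpv (Or.inl (by ring))
    · exact mkP p (p + p) (fun h => hp0 (by linear_combination -h)) hpv pp (Or.inl (by ring))
    · exact mkP (p + p) (p + p + p) (fun h => hp0 (by linear_combination -h)) pp ppp
        (Or.inl (by ring))
    · exact mkP (p + p + p) 0 (fun h => h3p0 h) ppp par0 (Or.inl (by linear_combination -h0))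
    · exact fun h => h2p h.symm
    · exact fun h => h2p (by linear_combination -h)
  · -- 3q ≠ 0
    intro h0
    have q1 : ((1 : ZMod n) + q).val % 2 = 1 := by have := par_add 1 q; omega
    have q2 : ((1 : ZMod n) + q + q).val % 2 = 1 := by have := par_add (1 + q) q; omega
    refine mk3 (u := (1 : ZMod n)) (v := 1 + q) (w := 1 + q + q) ?_ ?_ ?_ ?_ h5
    · exact mkQ 1 (1 + q) (fun h => hq0 (by linear_combination -h)) par1 q1 (Or.inl (by ring))
    · exact mkQ (1 + q) (1 + q + q) (fun h => hq0 (by linear_combination -h)) q1 q2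
        (Or.inl (by ring))
    · exact mkQ (1 + q + q) 1 (fun h => h2q (by linear_combination h)) q2 par1
        (Or.inl (by linear_combination -h0))
    · exact fun h => h2q (by linear_combination -h)
  · -- 4q ≠ 0
    intro h0
    have h3q0 : q + q + q ≠ 0 := fun h => hq0 (by linear_combination h0 - h)
    have q1 : ((1 : ZMod n) + q).val % 2 = 1 := by have := par_add 1 q; omega
    have q2 : ((1 : ZMod n) + q + q).val % 2 = 1 := by have := par_add (1 + q) q; omega
    have q3 : ((1 : ZMod n) + q + q + q).val % 2 = 1 := by have := par_add (1 + q + q) q; omega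
    refine mk4 (u := (1 : ZMod n)) (v := 1 + q) (w := 1 + q + q) (x := 1 + q + q + q)
      ?_ ?_ ?_ ?_ ?_ ?_ h5
    · exact mkQ 1 (1 + q) (fun h => hq0 (by linear_combination -h)) par1 q1 (Or.inl (by ring))
    · exact mkQ (1 + q) (1 + q + q) (fun h => hq0 (by linear_combination -h)) q1 q2
        (Or.inl (by ring))
    · exact mkQ (1 + q + q) (1 + q + q + q) (fun h => hq0 (by linear_combination -h)) q2 q3
        (Or.inl (by ring))
    · exact mkQ (1 + q + q + q) 1 (fun h => h3q0 (by linear_combination h)) q3 par1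
        (Or.inl (by linear_combination -h0))
    · exact fun h => h2q (by linear_combination -h)
    · exact fun h => h2q (by linear_combination -h)
  · -- condition (ii)
    intro a ha b hb c hc d hd hab hcd hpair heq
    have hoa := hodd a ha
    have hoc := hodd c hc
    have hpar : (a - b).val % 2 = 0 := by have := par_sub a b; have := hodd b hb; omega
    refine mk4 (u := (0 : ZMod n)) (v := a) (w := a - b) (x := c) ?_ ?_ ?_ ?_ ?_ ?_ h5
    · exact mkK 0 a par0 hoa (by simpa using ha)
    · refine (mkK (a - b) a hpar hoa ?_).symm
      rw [show a - (a - b) = b by ring]; exact hb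
    · refine mkK (a - b) c hpar hoc ?_
      rw [show c - (a - b) = d by linear_combination -heq]; exact hd
    · exact (mkK 0 c par0 hoc (by simpa using hc)).symm
    · exact fun h => hab (by linear_combination -h)
    · exact fun h => hpair (by rw [Prod.mk.injEq]; exact ⟨h, by linear_combination h - heq⟩)
  · -- condition (iii)
    intro a ha b hb hab ω ω' hω hω' heq
    rcases hω with h1|h1|h1|h1|h1 <;> rcases hω' with h2|h2|h2|h2|h2
    · exact hab (by linear_combination heq + h1 - h2)
    · exact HP a ha b hb hab (-p) (Or.inr rfl) (by linear_combination heq + h1 - h2)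
    · exact HP a ha b hb hab p (Or.inl rfl) (by linear_combination heq + h1 - h2)
    · exact HQ a ha b hb hab (-q) (Or.inr rfl) (by linear_combination heq + h1 - h2)
    · exact HQ a ha b hb hab q (Or.inl rfl) (by linear_combination heq + h1 - h2)
    · exact HP a ha b hb hab p (Or.inl rfl) (by linear_combination heq + h1 - h2)
    · exact hab (by linear_combination heq + h1 - h2)
    · exact H4 a ha b hb hab p (-p) (Or.inl rfl) (Or.inr rfl) (by linear_combination heq + h1 - h2)
    · exact H2PQ a ha b hb hab p q (Or.inl rfl) (Or.inl rfl) (by linear_combination heq + h1 - h2)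
    · exact H2PQ a ha b hb hab p (-q) (Or.inl rfl) (Or.inr rfl) (by linear_combination heq + h1 - h2)
    · exact HP a ha b hb hab (-p) (Or.inr rfl) (by linear_combination heq + h1 - h2)
    · exact H4 a ha b hb hab (-p) p (Or.inr rfl) (Or.inl rfl) (by linear_combination heq + h1 - h2)
    · exact hab (by linear_combination heq + h1 - h2)
    · exact H2PQ a ha b hb hab (-p) q (Or.inr rfl) (Or.inl rfl) (by linear_combination heq + h1 - h2)
    · exact H2PQ a ha b hb hab (-p) (-q) (Or.inr rfl) (Or.inr rfl) (by linear_combination heq + h1 - h2)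
    · exact HQ a ha b hb hab q (Or.inl rfl) (by linear_combination heq + h1 - h2)
    · exact H2PQ b hb a ha hab.symm p q (Or.inl rfl) (Or.inl rfl) (by linear_combination -heq - h1 + h2)
    · exact H2PQ b hb a ha hab.symm (-p) q (Or.inr rfl) (Or.inl rfl) (by linear_combination -heq - h1 + h2)
    · exact hab (by linear_combination heq + h1 - h2)
    · exact H2Q a ha b hb hab q (-q) (Or.inl rfl) (Or.inr rfl) (by linear_combination heq + h1 - h2)
    · exact HQ a ha b hb hab (-q) (Or.inr rfl) (by linear_combination heq + h1 - h2)
    · exact H2PQ b hb a ha hab.symm p (-q) (Or.inl rfl) (Or.inr rfl) (by linear_combination -heq - h1 + h2)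
    · exact H2PQ b hb a ha hab.symm (-p) (-q) (Or.inr rfl) (Or.inr rfl) (by linear_combination -heq - h1 + h2)
    · exact H2Q a ha b hb hab (-q) q (Or.inr rfl) (Or.inl rfl) (by linear_combination heq + h1 - h2)
    · exact hab (by linear_combination heq + h1 - h2)

/-- S_{2t}(P,Q; k_1,…,k_w) has girth at least 5 iff (i) 3P, 4P, 3Q, 4Q ≠ 0 in Z_{2t};
(ii) all differences k_i − k_j (i ≠ j) are pairwise distinct;
(iii) no relation k_i − k_j = ω − ω′ with ω, ω′ ∈ {0, ±P, ±Q} (in particular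
k_i − k_j ≠ 0 for i ≠ j). -/
theorem stmt6 (t : ℕ) (ht : 5 ≤ t) (P Q : ℕ)
    (hPe : Even P) (hQe : Even Q) (hP0 : 0 < P) (hPt : P < t)
    (hQ0 : 0 < Q) (hQt : Q < t) (hPQ : P ≠ Q)
    (K : Finset (ZMod (2 * t))) (hodd : ∀ k ∈ K, Odd k.val) :
    5 ≤ (SPQGraph (2 * t) (P : ZMod (2 * t)) (Q : ZMod (2 * t))
          (K : Set (ZMod (2 * t)))).egirth ↔
      ((((3 * P : ℕ) : ZMod (2 * t)) ≠ 0 ∧ (((4 * P : ℕ) : ZMod (2 * t)) ≠ 0) ∧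
        (((3 * Q : ℕ) : ZMod (2 * t)) ≠ 0) ∧ (((4 * Q : ℕ) : ZMod (2 * t)) ≠ 0)) ∧
       (∀ a ∈ K, ∀ b ∈ K, ∀ c ∈ K, ∀ d ∈ K,
          a ≠ b → c ≠ d → (a, b) ≠ (c, d) → a - b ≠ c - d) ∧
       (∀ a ∈ K, ∀ b ∈ K, a ≠ b →
          ∀ ω ∈ ({0, (P : ZMod (2 * t)), -(P : ZMod (2 * t)),
                  (Q : ZMod (2 * t)), -(Q : ZMod (2 * t))} : Set (ZMod (2 * t))),
          ∀ ω' ∈ ({0, (P : ZMod (2 * t)), -(P : ZMod (2 * t)),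
                  (Q : ZMod (2 * t)), -(Q : ZMod (2 * t))} : Set (ZMod (2 * t))),
            a - b ≠ ω - ω')) := by
  haveI : NeZero (2 * t) := ⟨by omega⟩
  have hn2 : 2 ∣ 2 * t := ⟨t, rfl⟩
  have hn1 : 1 < 2 * t := by omega
  have hPe' : P % 2 = 0 := Nat.even_iff.mp hPe
  have hQe' : Q % 2 = 0 := Nat.even_iff.mp hQe
  have hne0 : ∀ m : ℕ, 0 < m → m < 2 * t → ((m : ZMod (2 * t))) ≠ 0 := by
    intro m h1 h2 h
    have := congrArg ZMod.val h
    rw [ZMod.val_cast_of_lt h2, ZMod.val_zero] at this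
    omega
  have hpv : ((P : ZMod (2 * t))).val % 2 = 0 := by
    rw [ZMod.val_cast_of_lt (by omega)]; exact hPe'
  have hqv : ((Q : ZMod (2 * t))).val % 2 = 0 := by
    rw [ZMod.val_cast_of_lt (by omega)]; exact hQe'
  have hp0 : (P : ZMod (2 * t)) ≠ 0 := hne0 P hP0 (by omega)
  have hq0 : (Q : ZMod (2 * t)) ≠ 0 := hne0 Q hQ0 (by omega)
  have h2p : (P : ZMod (2 * t)) + P ≠ 0 := fun h =>
    hne0 (P + P) (by omega) (by omega) (by push_cast; linear_combination h)
  have h2q : (Q : ZMod (2 * t)) + Q ≠ 0 := fun h =>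
    hne0 (Q + Q) (by omega) (by omega) (by push_cast; linear_combination h)
  have hpq : (P : ZMod (2 * t)) ≠ (Q : ZMod (2 * t)) := by
    intro h
    have := congrArg ZMod.val h
    rw [ZMod.val_cast_of_lt (by omega), ZMod.val_cast_of_lt (by omega)] at this
    exact hPQ this
  have hpq' : (P : ZMod (2 * t)) + (Q : ZMod (2 * t)) ≠ 0 := fun h =>
    hne0 (P + Q) (by omega) (by omega) (by push_cast; linear_combination h)
  have hodd' : ∀ k ∈ (K : Set (ZMod (2 * t))), k.val % 2 = 1 := fun k hk =>
    Nat.odd_iff.mp (hodd k hk)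
  constructor
  · intro h5
    obtain ⟨⟨c3p, c4p, c3q, c4q⟩, cK2, cK3⟩ :=
      conds (2 * t) hn1 hn2 _ _ hpv hqv hp0 hq0 h2p h2q _ hodd' h5
    refine ⟨⟨fun h => c3p ?_, fun h => c4p ?_, fun h => c3q ?_, fun h => c4q ?_⟩, ?_, ?_⟩
    · push_cast at h; linear_combination h
    · push_cast at h; linear_combination h
    · push_cast at h; linear_combination h
    · push_cast at h; linear_combination h
    · exact fun a ha b hb c hc d hd => cK2 a ha b hb c hc d hd
    · intro a ha b hb hab ω hω ω' hω'
      exact cK3 a ha b hb hab ω ω' (by simpa using hω) (by simpa using hω')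
  · rintro ⟨⟨c3p, c4p, c3q, c4q⟩, cK2, cK3⟩
    refine noshort (2 * t) hn2 _ _ hp0 hq0 h2p
      (fun h => c3p (by push_cast; linear_combination h))
      (fun h => c4p (by push_cast; linear_combination h)) h2q
      (fun h => c3q (by push_cast; linear_combination h))
      (fun h => c4q (by push_cast; linear_combination h)) hpq hpq' _ hodd'
      (fun a ha b hb c hc d hd => cK2 a ha b hb c hc d hd) ?_
    intro a ha b hb hab ω ω' hω hω'
    exact cK3 a ha b hb hab ω (by simpa using hω) ω' (by simpa using hω')
end

section
/- Let P ≠ Q be even positive integers and k_1,…,k_w distinct odd integers such that the infinite graph S_∞(P,Q; k_1,…,k_w) has girth at least 5 and span D. Then for every t ≥ D+1, the finite graph S_{2t}(P,Q; k_1,…,k_w) has girth at least 5. -/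
/-- The set of quantities whose maximum is the span of S_∞(P,Q; k_1,…,k_w). -/
def spanSet (P Q : ℤ) (K : Set ℤ) : Set ℤ :=
  {x | ∃ k ∈ K, x = |k|} ∪ {x | ∃ a ∈ K, ∃ b ∈ K, x = |a - b|} ∪
  {x | ∃ ω ∈ ({0, P, -P, Q, -Q} : Set ℤ), ∃ ω' ∈ ({0, P, -P, Q, -Q} : Set ℤ),
    x = |ω - ω'|}

open SimpleGraph

lemma parity_lift {t : ℕ} (ht : 0 < t) {A : ℤ} {a : ZMod (2*t)} (hA : (A : ZMod (2*t)) = a) :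
    Even a.val ↔ A % 2 = 0 := by
  haveI : NeZero (2*t) := ⟨by omega⟩
  have hv : (a.val : ℤ) = A % ((2*t : ℕ) : ℤ) := by
    rw [← hA, ZMod.val_intCast]
  have h2 : ((2*t : ℕ) : ℤ) = 2 * (t : ℤ) := by push_cast; ring
  rw [h2] at hv
  have h3 : A % (2 * (t:ℤ)) % 2 = A % 2 :=
    Int.emod_emod_of_dvd A ⟨(t:ℤ), rfl⟩
  rw [← Int.even_coe_nat, Int.even_iff, hv, h3]

lemma step_lift {t : ℕ} (ht : 0 < t) (P Q : ℤ) (K : Finset ℤ)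
    (hodd : ∀ k ∈ K, Odd k) (hP0 : 0 < P) (hQ0 : 0 < Q)
    {a b : ZMod (2*t)} {A : ℤ} (hA : (A : ZMod (2*t)) = a)
    (h : (SPQGraph (2*t) ((P : ZMod (2*t))) ((Q : ZMod (2*t)))
      {x : ZMod (2*t) | ∃ k ∈ K, x = (k : ZMod (2*t))}).Adj a b) :
    ∃ s : ℤ, ((A + s : ℤ) : ZMod (2*t)) = b ∧ (SPQGraphZ P Q (K : Set ℤ)).Adj A (A+s) ∧
      ((A % 2 = 0 ∧ (A+s) % 2 = 1 ∧ s ∈ K) ∨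
       (A % 2 = 1 ∧ (A+s) % 2 = 0 ∧ -s ∈ K) ∨
       (A % 2 = 0 ∧ (A+s) % 2 = 0 ∧ (s = P ∨ s = -P)) ∨
       (A % 2 = 1 ∧ (A+s) % 2 = 1 ∧ (s = Q ∨ s = -Q))) := by
  obtain ⟨hne, hc⟩ : a ≠ b ∧ _ := h
  rcases hc with (⟨hea, k, hkK, hbk⟩ | ⟨heb, k, hkK, habk⟩) | ⟨hea, heb, hPP⟩ | ⟨hoa, hob, hQQ⟩
  · -- even a, b - a = k
    have hkodd := (hodd k hkK)
    have hk2 : k % 2 = 1 := Int.odd_iff.mp hkodd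
    have hpa : A % 2 = 0 := (parity_lift ht hA).mp hea
    have hcast : ((A + k : ℤ) : ZMod (2*t)) = b := by
      push_cast
      rw [hA, ← hbk]; ring
    refine ⟨k, hcast, ⟨?_, Or.inl (Or.inl ⟨Int.even_iff.mpr hpa, by simpa using hkK⟩)⟩, ?_⟩
    · intro hAA
      omega
    · exact Or.inl ⟨hpa, by omega, hkK⟩
  · -- even b, a - b = k
    have hkodd := (hodd k hkK)
    have hk2 : k % 2 = 1 := Int.odd_iff.mp hkodd
    have hcast : ((A + (-k) : ℤ) : ZMod (2*t)) = b := by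
      push_cast
      rw [hA, ← habk]; ring
    have hpb : (A + (-k)) % 2 = 0 := (parity_lift ht hcast).mp heb
    refine ⟨-k, hcast, ⟨?_, Or.inl (Or.inr ⟨Int.even_iff.mpr hpb, by simpa using hkK⟩)⟩, ?_⟩
    · intro hAA
      omega
    · exact Or.inr (Or.inl ⟨by omega, hpb, by simpa using hkK⟩)
  · -- P edge
    have hpa : A % 2 = 0 := (parity_lift ht hA).mp hea
    rcases hPP with hP | hP
    · have hcast : ((A + P : ℤ) : ZMod (2*t)) = b := by
        push_cast
        rw [hA, ← hP]; ring
      have hpb : (A + P) % 2 = 0 := (parity_lift ht hcast).mp heb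
      refine ⟨P, hcast, ⟨by omega, Or.inr (Or.inl ⟨Int.even_iff.mpr hpa,
        Int.even_iff.mpr hpb, Or.inl (by ring)⟩)⟩, Or.inr (Or.inr (Or.inl ⟨hpa, hpb, Or.inl rfl⟩))⟩
    · have hcast : ((A + (-P) : ℤ) : ZMod (2*t)) = b := by
        push_cast
        rw [hA, ← hP]; ring
      have hpb : (A + (-P)) % 2 = 0 := (parity_lift ht hcast).mp heb
      refine ⟨-P, hcast, ⟨by omega, Or.inr (Or.inl ⟨Int.even_iff.mpr hpa,
        Int.even_iff.mpr hpb, Or.inr (by ring)⟩)⟩, Or.inr (Or.inr (Or.inl ⟨hpa, hpb, Or.inr rfl⟩))⟩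
  · -- Q edge
    have hpa : A % 2 = 1 := by
      have h1 : ¬ (A % 2 = 0) := fun h => (Nat.not_even_iff_odd.mpr hoa) ((parity_lift ht hA).mpr h)
      omega
    rcases hQQ with hQ | hQ
    · have hcast : ((A + Q : ℤ) : ZMod (2*t)) = b := by
        push_cast
        rw [hA, ← hQ]; ring
      have hpb : (A + Q) % 2 = 1 := by
        have h1 : ¬ ((A + Q) % 2 = 0) := fun h =>
          (Nat.not_even_iff_odd.mpr hob) ((parity_lift ht hcast).mpr h)
        omega
      refine ⟨Q, hcast, ⟨by omega, Or.inr (Or.inr ⟨Int.odd_iff.mpr hpa,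
        Int.odd_iff.mpr hpb, Or.inl (by ring)⟩)⟩, Or.inr (Or.inr (Or.inr ⟨hpa, hpb, Or.inl rfl⟩))⟩
    · have hcast : ((A + (-Q) : ℤ) : ZMod (2*t)) = b := by
        push_cast
        rw [hA, ← hQ]; ring
      have hpb : (A + (-Q)) % 2 = 1 := by
        have h1 : ¬ ((A + (-Q)) % 2 = 0) := fun h =>
          (Nat.not_even_iff_odd.mpr hob) ((parity_lift ht hcast).mpr h)
        omega
      refine ⟨-Q, hcast, ⟨by omega, Or.inr (Or.inr ⟨Int.odd_iff.mpr hpa,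
        Int.odd_iff.mpr hpb, Or.inr (by ring)⟩)⟩, Or.inr (Or.inr (Or.inr ⟨hpa, hpb, Or.inr rfl⟩))⟩

lemma triangle_cycle {V : Type*} {G : SimpleGraph V} {A B C : V}
    (h1 : G.Adj A B) (h2 : G.Adj B C) (h3 : G.Adj C A)
    (hAC : A ≠ C) :
    ∃ (w : G.Walk A A), w.IsCycle ∧ w.length = 3 := by
  refine ⟨.cons h1 (.cons h2 (.cons h3 .nil)), ?_, rfl⟩
  have e1 := h1.ne
  have e2 := h2.ne
  have e3 := h3.ne
  simp [Walk.isCycle_def, Walk.isTrail_def, Sym2.eq_iff]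
  tauto

lemma quad_cycle {V : Type*} {G : SimpleGraph V} {A B C E : V}
    (h1 : G.Adj A B) (h2 : G.Adj B C) (h3 : G.Adj C E) (h4 : G.Adj E A)
    (hAC : A ≠ C) (hBE : B ≠ E) :
    ∃ (w : G.Walk A A), w.IsCycle ∧ w.length = 4 := by
  refine ⟨.cons h1 (.cons h2 (.cons h3 (.cons h4 .nil))), ?_, rfl⟩
  have e1 := h1.ne
  have e2 := h2.ne
  have e3 := h3.ne
  have e4 := h4.ne
  simp [Walk.isCycle_def, Walk.isTrail_def, Sym2.eq_iff]
  tauto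

lemma cycle3_decomp {V : Type*} {G : SimpleGraph V} {a : V} (w : G.Walk a a)
    (hw : w.IsCycle) (hl : w.length = 3) :
    ∃ b c, G.Adj a b ∧ G.Adj b c ∧ G.Adj c a ∧ a ≠ c ∧ b ≠ c ∧ a ≠ b := by
  cases w with
  | nil => simp at hl
  | cons h1 p =>
    cases p with
    | nil => simp at hl
    | cons h2 q =>
      cases q with
      | nil => simp at hl
      | cons h3 r =>
        have hr : r.length = 0 := by simpa using hl
        have he := SimpleGraph.Walk.eq_of_length_eq_zero hr
        subst he
        rw [SimpleGraph.Walk.length_eq_zero_iff, SimpleGraph.Walk.nil_iff_eq_nil] at hr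
        subst hr
        have hnd := hw.2
        simp only [Walk.support_cons, Walk.support_nil, List.tail_cons] at hnd
        simp only [List.nodup_cons, List.mem_cons, List.mem_singleton, List.not_mem_nil,
          List.nodup_nil] at hnd
        refine ⟨_, _, h1, h2, h3, ?_, ?_, ?_⟩ <;> tauto

lemma cycle4_decomp {V : Type*} {G : SimpleGraph V} {a : V} (w : G.Walk a a)
    (hw : w.IsCycle) (hl : w.length = 4) :
    ∃ b c d, G.Adj a b ∧ G.Adj b c ∧ G.Adj c d ∧ G.Adj d a ∧ a ≠ c ∧ b ≠ d ∧
      a ≠ b ∧ b ≠ c ∧ c ≠ d ∧ a ≠ d := by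
  cases w with
  | nil => simp at hl
  | cons h1 p =>
    cases p with
    | nil => simp at hl
    | cons h2 q =>
      cases q with
      | nil => simp at hl
      | cons h3 r =>
        cases r with
        | nil => simp at hl
        | cons h4 s =>
          have hr : s.length = 0 := by simpa using hl
          have he := SimpleGraph.Walk.eq_of_length_eq_zero hr
          subst he
          rw [SimpleGraph.Walk.length_eq_zero_iff, SimpleGraph.Walk.nil_iff_eq_nil] at hr
          subst hr
          have hnd := hw.2
          simp only [Walk.support_cons, Walk.support_nil, List.tail_cons] at hnd
          simp only [List.nodup_cons, List.mem_cons, List.mem_singleton, List.not_mem_nil,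
            List.nodup_nil] at hnd
          refine ⟨_, _, _, h1, h2, h3, h4, ?_, ?_, ?_, ?_, ?_, ?_⟩ <;> tauto

set_option maxHeartbeats 1600000 in
/-- If S_∞(P,Q; k_1,…,k_w) has girth at least 5 and span D, then for every
t ≥ D + 1 the finite graph S_{2t}(P,Q; k_1,…,k_w) has girth at least 5. -/
theorem stmt9 (P Q D : ℤ) (hPe : Even P) (hQe : Even Q)
    (hP0 : 0 < P) (hQ0 : 0 < Q) (hPQ : P ≠ Q)
    (K : Finset ℤ) (hodd : ∀ k ∈ K, Odd k)
    (hgirth : 5 ≤ (SPQGraphZ P Q (K : Set ℤ)).egirth)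
    (hspan : IsGreatest (spanSet P Q (K : Set ℤ)) D) :
    ∀ t : ℕ, D + 1 ≤ (t : ℤ) →
      5 ≤ (SPQGraph (2 * t) ((P : ZMod (2 * t))) ((Q : ZMod (2 * t)))
        {x : ZMod (2 * t) | ∃ k ∈ K, x = (k : ZMod (2 * t))}).egirth := by
  intro t ht
  have hub := hspan.2
  have hD0 : 0 ≤ D := by
    have h0 : (0:ℤ) ∈ spanSet P Q (K : Set ℤ) :=
      Or.inr ⟨0, by simp, 0, by simp, by simp⟩
    exact hub h0
  have ht0 : 0 < t := by omega
  have hPD : 2*P ≤ D := by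
    have hm : |P - (-P)| ∈ spanSet P Q (K : Set ℤ) :=
      Or.inr ⟨P, by simp, -P, by simp, rfl⟩
    have := hub hm
    rw [abs_le] at this
    omega
  have hQD : 2*Q ≤ D := by
    have hm : |Q - (-Q)| ∈ spanSet P Q (K : Set ℤ) :=
      Or.inr ⟨Q, by simp, -Q, by simp, rfl⟩
    have := hub hm
    rw [abs_le] at this
    omega
  have hPQD : P + Q ≤ D := by
    have hm : |P - (-Q)| ∈ spanSet P Q (K : Set ℤ) :=
      Or.inr ⟨P, by simp, -Q, by simp, rfl⟩
    have := hub hm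
    rw [abs_le] at this
    omega
  have hK1 : ∀ k : ℤ, k ∈ K → k ≤ D ∧ -D ≤ k := by
    intro k hk
    have hm : |k| ∈ spanSet P Q (K : Set ℤ) := Or.inl (Or.inl ⟨k, hk, rfl⟩)
    have := hub hm
    rw [abs_le] at this
    exact ⟨this.2, this.1⟩
  have hKpair : ∀ x y : ℤ, x ∈ K → y ∈ K → x - y ≤ D ∧ y - x ≤ D := by
    intro x y hx hy
    have hm : |x - y| ∈ spanSet P Q (K : Set ℤ) := Or.inl (Or.inr ⟨x, hx, y, hy, rfl⟩)
    have := hub hm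
    rw [abs_le] at this
    constructor <;> omega
  have cv : ∀ s B : ℤ, ((B % 2 = 0 ∧ (B+s) % 2 = 1 ∧ s ∈ K) ∨
       (B % 2 = 1 ∧ (B+s) % 2 = 0 ∧ -s ∈ K) ∨
       (B % 2 = 0 ∧ (B+s) % 2 = 0 ∧ (s = P ∨ s = -P)) ∨
       (B % 2 = 1 ∧ (B+s) % 2 = 1 ∧ (s = Q ∨ s = -Q))) →
      ((B % 2 = 0 ∧ (B+s) % 2 = 1 ∧ s ∈ K) ∨
       (B % 2 = 1 ∧ (B+s) % 2 = 0 ∧ -s ∈ K) ∨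
       ((B+s) % 2 = B % 2 ∧ 2*s ≤ D ∧ -D ≤ 2*s)) := by
    rintro s B (h|h|⟨p,q,rfl|rfl⟩|⟨p,q,rfl|rfl⟩)
    · exact Or.inl h
    · exact Or.inr (Or.inl h)
    all_goals exact Or.inr (Or.inr ⟨by omega, by omega, by omega⟩)
  have hZ := (SimpleGraph.le_egirth).mp hgirth
  rw [SimpleGraph.le_egirth]
  intro a w hw
  by_contra hlt
  push_neg at hlt
  have hlen : w.length < 5 := by exact_mod_cast hlt
  have h3le := hw.three_le_length
  have hcast2t : ((2*t : ℕ) : ℤ) = 2 * (t:ℤ) := by push_cast; ring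
  have hlen34 : w.length = 3 ∨ w.length = 4 := by omega
  obtain ⟨A, hA⟩ := ZMod.intCast_surjective a
  rcases hlen34 with hlw | hlw
  · -- length 3
    obtain ⟨b, c, h1, h2, h3, hac, hbc, hab⟩ := cycle3_decomp w hw hlw
    obtain ⟨s₁, hc₁, ha₁, ht₁⟩ := step_lift ht0 P Q K hodd hP0 hQ0 hA h1
    obtain ⟨s₂, hc₂, ha₂, ht₂⟩ := step_lift ht0 P Q K hodd hP0 hQ0 hc₁ h2
    obtain ⟨s₃, hc₃, ha₃, ht₃⟩ := step_lift ht0 P Q K hodd hP0 hQ0 hc₂ h3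
    have hdvd : ((2*t : ℕ) : ℤ) ∣ (s₁ + s₂ + s₃) := by
      rw [← ZMod.intCast_zmod_eq_zero_iff_dvd]
      have hh : ((s₁ + s₂ + s₃ : ℤ) : ZMod (2*t)) =
          ((A + s₁ + s₂ + s₃ : ℤ) : ZMod (2*t)) - ((A : ℤ) : ZMod (2*t)) := by
        push_cast; ring
      rw [hh, hc₃, hA, sub_self]
    have h2dvd : (2:ℤ) ∣ (s₁ + s₂ + s₃) := by
      refine dvd_trans ⟨(t:ℤ), ?_⟩ hdvd
      push_cast; ring
    have hbnd : -(2*(t:ℤ)) < s₁+s₂+s₃ ∧ s₁+s₂+s₃ < 2*(t:ℤ) := by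
      rcases cv _ _ ht₁ with ⟨p1,q1,k1⟩|⟨p1,q1,k1⟩|e1 <;>
      rcases cv _ _ ht₂ with ⟨p2,q2,k2⟩|⟨p2,q2,k2⟩|e2 <;>
      rcases cv _ _ ht₃ with ⟨p3,q3,k3⟩|⟨p3,q3,k3⟩|e3 <;>
      (first
        | omega
        | (try have hp12 := hKpair _ _ k1 k2
           try have hp13 := hKpair _ _ k1 k3
           try have hp23 := hKpair _ _ k2 k3
           omega))
    have hsum : s₁ + s₂ + s₃ = 0 := by
      refine Int.eq_zero_of_abs_lt_dvd hdvd ?_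
      rw [hcast2t, abs_lt]
      exact ⟨hbnd.1, hbnd.2⟩
    have d1 : A ≠ A + s₁ := fun h => hab (by rw [← hA, h, hc₁])
    have d2 : A ≠ A + s₁ + s₂ := fun h => hac (by rw [← hA, h, hc₂])
    have ha₃' : (SPQGraphZ P Q (K : Set ℤ)).Adj (A+s₁+s₂) A := by
      have he : A + s₁ + s₂ + s₃ = A := by omega
      rw [he] at ha₃
      exact ha₃
    obtain ⟨W, hWc, hWl⟩ := triangle_cycle ha₁ ha₂ ha₃' d2
    have h5 := hZ A W hWc
    rw [hWl] at h5
    norm_num at h5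
  · -- length 4
    obtain ⟨b, c, d, h1, h2, h3, h4, hac, hbd, hab, hbc, hcd, had⟩ := cycle4_decomp w hw hlw
    obtain ⟨s₁, hc₁, ha₁, ht₁⟩ := step_lift ht0 P Q K hodd hP0 hQ0 hA h1
    obtain ⟨s₂, hc₂, ha₂, ht₂⟩ := step_lift ht0 P Q K hodd hP0 hQ0 hc₁ h2
    obtain ⟨s₃, hc₃, ha₃, ht₃⟩ := step_lift ht0 P Q K hodd hP0 hQ0 hc₂ h3
    obtain ⟨s₄, hc₄, ha₄, ht₄⟩ := step_lift ht0 P Q K hodd hP0 hQ0 hc₃ h4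
    have hdvd : ((2*t : ℕ) : ℤ) ∣ (s₁ + s₂ + s₃ + s₄) := by
      rw [← ZMod.intCast_zmod_eq_zero_iff_dvd]
      have hh : ((s₁ + s₂ + s₃ + s₄ : ℤ) : ZMod (2*t)) =
          ((A + s₁ + s₂ + s₃ + s₄ : ℤ) : ZMod (2*t)) - ((A : ℤ) : ZMod (2*t)) := by
        push_cast; ring
      rw [hh, hc₄, hA, sub_self]
    have h2dvd : (2:ℤ) ∣ (s₁ + s₂ + s₃ + s₄) := by
      refine dvd_trans ⟨(t:ℤ), ?_⟩ hdvd
      push_cast; ring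
    have hbnd : -(2*(t:ℤ)) < s₁+s₂+s₃+s₄ ∧ s₁+s₂+s₃+s₄ < 2*(t:ℤ) := by
      rcases cv _ _ ht₁ with ⟨p1,q1,k1⟩|⟨p1,q1,k1⟩|e1 <;>
      rcases cv _ _ ht₂ with ⟨p2,q2,k2⟩|⟨p2,q2,k2⟩|e2 <;>
      rcases cv _ _ ht₃ with ⟨p3,q3,k3⟩|⟨p3,q3,k3⟩|e3 <;>
      rcases cv _ _ ht₄ with ⟨p4,q4,k4⟩|⟨p4,q4,k4⟩|e4 <;>
      (first
        | omega
        | (try have hp12 := hKpair _ _ k1 k2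
           try have hp13 := hKpair _ _ k1 k3
           try have hp14 := hKpair _ _ k1 k4
           try have hp23 := hKpair _ _ k2 k3
           try have hp24 := hKpair _ _ k2 k4
           try have hp34 := hKpair _ _ k3 k4
           omega))
    have hsum : s₁ + s₂ + s₃ + s₄ = 0 := by
      refine Int.eq_zero_of_abs_lt_dvd hdvd ?_
      rw [hcast2t, abs_lt]
      exact ⟨hbnd.1, hbnd.2⟩
    have d2 : A ≠ A + s₁ + s₂ := fun h => hac (by rw [← hA, h, hc₂])
    have dbd : A + s₁ ≠ A + s₁ + s₂ + s₃ := fun h => hbd (by rw [← hc₁, h, hc₃])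
    have ha₄' : (SPQGraphZ P Q (K : Set ℤ)).Adj (A+s₁+s₂+s₃) A := by
      have he : A + s₁ + s₂ + s₃ + s₄ = A := by omega
      rw [he] at ha₄
      exact ha₄
    obtain ⟨W, hWc, hWl⟩ := quad_cycle ha₁ ha₂ ha₃ ha₄' d2 dbd
    have h5 := hZ A W hWc
    rw [hWl] at h5
    norm_num at h5
end
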